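/- Consider a K-armed bandit where every arm in a subset I ⊆ [K] always yields the same fixed constant reward γ ∈ [0,1]. If the UCB1 algorithm (choosing the arm maximizing sample mean plus sqrt(2 log t / N_k(t-1))) is run on this environment, then at any time t, the numbers of pulls of any two arms in I differ by at most 1; consequently, when τ total pulls have been made on arms in I, each arm in I has been pulled at least ⌊τ/|I|⌋ and at most ⌈τ/|I|⌉ times. -/

import Mathlib

open Real

/-- UCB1 on a set `I` of arms all yielding the constant reward `γ`
pulls the arms in `I` in a balanced way: at any time the pull counts of any two
arms of `I` differ by at most 1, and hence when `τ` total pulls have been made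
on `I`, each arm of `I` has between `⌊τ/|I|⌋` and `⌈τ/|I|⌉` pulls. -/
theorem stmt_0 (K : ℕ) (hK : 0 < K) (I : Finset (Fin K)) (hI : I.Nonempty)
    (γ : ℝ) (hγ : γ ∈ Set.Icc (0:ℝ) 1)
    (pol : ℕ → Fin K) (N : Fin K → ℕ → ℕ)
    (hN : ∀ k t, N k t = ((Finset.range t).filter (fun s => pol s = k)).card)
    (hmem : ∀ t, pol t ∈ I)
    -- if some arm of I is still unpulled, UCB1 pulls an unpulled arm (infinite index)
    (hinit : ∀ t, ∀ k ∈ I, N k t = 0 → N (pol t) t = 0)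
    -- once every arm of I has been pulled, the chosen arm maximizes the UCB1 index
    (hUCB : ∀ t, (∀ k ∈ I, 1 ≤ N k t) → ∀ k ∈ I,
      γ + Real.sqrt (2 * Real.log t / (N k t : ℝ)) ≤
        γ + Real.sqrt (2 * Real.log t / (N (pol t) t : ℝ))) :
    (∀ t, ∀ k ∈ I, ∀ k' ∈ I, N k t ≤ N k' t + 1) ∧
    (∀ t τ, (∑ k ∈ I, N k t) = τ → ∀ k ∈ I,
      τ / I.card ≤ N k t ∧ N k t ≤ (τ + I.card - 1) / I.card) := by
  have hc : 0 < I.card := Finset.card_pos.mpr hI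
  have hstep : ∀ k t, N k (t+1) = if pol t = k then N k t + 1 else N k t := by
    intro k t
    rw [hN, hN, Finset.range_add_one, Finset.filter_insert]
    split
    · rw [Finset.card_insert_of_notMem (by simp)]
    · rfl
  have hsum : ∀ t, (∑ k ∈ I, N k t) = t := by
    intro t
    induction t with
    | zero => simp [hN]
    | succ t ih =>
      have h1 : ∀ k ∈ I, N k (t+1) = N k t + (if pol t = k then 1 else 0) := by
        intro k _
        rw [hstep]; split <;> simp
      rw [Finset.sum_congr rfl h1, Finset.sum_add_distrib, ih,
        Finset.sum_ite_eq I (pol t) (fun _ => 1), if_pos (hmem t)]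
  have hbal : ∀ t, ∀ k ∈ I, ∀ k' ∈ I, N k t ≤ N k' t + 1 := by
    intro t
    induction t with
    | zero => intro k _ k' _; simp [hN]
    | succ t ih =>
      intro k hk k' hk'
      rw [hstep, hstep]
      by_cases hpk : pol t = k
      · by_cases hpk' : pol t = k'
        · rw [if_pos hpk, if_pos hpk']
          have : k = k' := hpk ▸ hpk'
          subst this; omega
        · rw [if_pos hpk, if_neg hpk']
          have hkk' : k ≠ k' := fun h => hpk' (h ▸ hpk)
          -- need N k t ≤ N k' t
          have key : N k t ≤ N k' t := by
            by_cases hz : ∃ j ∈ I, N j t = 0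
            · obtain ⟨j, hj, hjz⟩ := hz
              have := hinit t j hj hjz
              rw [hpk] at this
              omega
            · push_neg at hz
              have hall : ∀ j ∈ I, 1 ≤ N j t := fun j hj => Nat.one_le_iff_ne_zero.mpr (hz j hj)
              have ht2 : 2 ≤ t := by
                have hsub : ({k, k'} : Finset (Fin K)) ⊆ I := by
                  intro x hx
                  simp only [Finset.mem_insert, Finset.mem_singleton] at hx
                  rcases hx with h | h <;> subst h <;> assumption
                have := Finset.sum_le_sum_of_subset (f := fun j => N j t) hsub
                rw [Finset.sum_pair hkk', hsum t] at this
                have h1 := hall k hk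
                have h2 := hall k' hk'
                omega
              have hucb := hUCB t hall k' hk'
              rw [hpk] at hucb
              have hsq : Real.sqrt (2 * Real.log t / (N k' t : ℝ)) ≤
                  Real.sqrt (2 * Real.log t / (N k t : ℝ)) := by linarith
              have hlog : 0 < Real.log t := by
                apply Real.log_pos
                exact_mod_cast Nat.lt_of_lt_of_le (by norm_num) ht2
              have hNk : (0:ℝ) < (N k t : ℝ) := by exact_mod_cast hall k hk
              have hNk' : (0:ℝ) < (N k' t : ℝ) := by exact_mod_cast hall k' hk'
              have hle : 2 * Real.log t / (N k' t : ℝ) ≤ 2 * Real.log t / (N k t : ℝ) := by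
                have hx : (0:ℝ) ≤ 2 * Real.log t / (N k t : ℝ) :=
                  div_nonneg (by linarith) hNk.le
                exact (Real.sqrt_le_sqrt_iff (x := 2 * Real.log t / (N k' t : ℝ))
                  (y := 2 * Real.log t / (N k t : ℝ)) hx).mp hsq
              rw [div_le_div_iff₀ hNk' hNk] at hle
              have : (N k t : ℝ) ≤ (N k' t : ℝ) :=
                le_of_mul_le_mul_left (by linarith) (by linarith)
              exact_mod_cast this
          omega
      · by_cases hpk' : pol t = k'
        · rw [if_neg hpk, if_pos hpk']
          have := ih k hk k' hk'
          omega
        · rw [if_neg hpk, if_neg hpk']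
          exact ih k hk k' hk'
  refine ⟨hbal, ?_⟩
  intro t τ hτ k hk
  constructor
  · by_contra hlt
    push_neg at hlt
    have h1 : N k t + 1 ≤ τ / I.card := hlt
    have h2 : (N k t + 1) * I.card ≤ τ := (Nat.le_div_iff_mul_le hc).mp h1
    have h3 : τ < I.card * (N k t + 1) := by
      rw [← hτ]
      calc ∑ j ∈ I, N j t < ∑ j ∈ I, (N k t + 1) := by
            apply Finset.sum_lt_sum
            · intro j hj; exact hbal t j hj k hk
            · exact ⟨k, hk, by omega⟩
        _ = I.card * (N k t + 1) := by rw [Finset.sum_const, smul_eq_mul]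
    rw [mul_comm] at h3
    omega
  · rcases Nat.eq_zero_or_pos (N k t) with h0 | hpos
    · rw [h0]; exact Nat.zero_le _
    · rw [Nat.le_div_iff_mul_le hc]
      have h3 : I.card * (N k t - 1) < τ := by
        rw [← hτ]
        calc I.card * (N k t - 1) = ∑ j ∈ I, (N k t - 1) := by
              rw [Finset.sum_const, smul_eq_mul]
          _ < ∑ j ∈ I, N j t := by
              apply Finset.sum_lt_sum
              · intro j hj
                have := hbal t k hk j hj
                omega
              · exact ⟨k, hk, by omega⟩
      obtain ⟨m, hm⟩ : ∃ m, N k t = m + 1 := ⟨N k t - 1, by omega⟩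
      rw [hm] at h3 ⊢
      simp only [Nat.add_sub_cancel] at h3
      have h4 : (m + 1) * I.card = I.card * m + I.card := by ring
      omega
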